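/- Let X be an Alexandrov discrete space and G its connectedness graph. Then X is a connected topological space if and only if G is a connected graph. -/

import Mathlib

/-- The connectedness graph of a topological space: distinct points are adjacent
iff the two-point subspace they form is connected. -/
def connectednessGraph (X : Type*) [TopologicalSpace X] : SimpleGraph X where
  Adj x y := x ≠ y ∧ IsConnected ({x, y} : Set X)
  symm := by
    constructor
    intro x y ⟨hne, hconn⟩
    exact ⟨hne.symm, by rwa [Set.pair_comm]⟩
  loopless := by
    constructor
    intro x ⟨hne, _⟩
    exact hne rfl

/-- If every open set containing `x` contains `y`, then the pair is connected. -/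
lemma pair_connected_of_specializes {X : Type*} [TopologicalSpace X] {x y : X}
    (h : ∀ s : Set X, IsOpen s → x ∈ s → y ∈ s) :
    IsConnected ({x, y} : Set X) := by
  refine ⟨⟨x, Or.inl rfl⟩, ?_⟩
  intro u v hu hv hcov ⟨a, ha, hau⟩ ⟨b, hb, hbv⟩
  rcases hcov (Or.inl rfl : x ∈ ({x, y} : Set X)) with hxu | hxv
  · have hyu := h u hu hxu
    refine ⟨b, hb, ?_, hbv⟩
    rcases hb with rfl | rfl
    · exact hxu
    · exact hyu
  · have hyv := h v hv hxv
    refine ⟨a, ha, hau, ?_⟩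
    rcases ha with rfl | rfl
    · exact hxv
    · exact hyv

/-- Along a walk in the connectedness graph, there is a connected set containing
both endpoints. -/
lemma walk_connected_set {X : Type*} [TopologicalSpace X] {x y : X}
    (w : (connectednessGraph X).Walk x y) :
    ∃ t : Set X, x ∈ t ∧ y ∈ t ∧ IsConnected t := by
  induction w with
  | nil => exact ⟨{_}, Set.mem_singleton _, Set.mem_singleton _, isConnected_singleton⟩
  | @cons a b c h _ ih =>
    obtain ⟨t, hbt, hct, htc⟩ := ih
    refine ⟨{a, b} ∪ t, Or.inl (Or.inl rfl), Or.inr hct, ?_⟩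
    exact IsConnected.union ⟨b, Or.inr rfl, hbt⟩ h.2 htc

theorem alexandrov_connected_iff_graph_connected (X : Type*) [TopologicalSpace X]
    (hX : ∀ S : Set (Set X), (∀ s ∈ S, IsOpen s) → IsOpen (⋂₀ S)) :
    ConnectedSpace X ↔ (connectednessGraph X).Connected := by
  -- minimal open neighborhoods
  set U : X → Set X := fun x => ⋂₀ {s : Set X | IsOpen s ∧ x ∈ s} with hU
  have hUopen : ∀ x, IsOpen (U x) := fun x => hX _ (fun s hs => hs.1)
  have hxU : ∀ x, x ∈ U x := fun x => fun s hs => hs.2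
  have hUspec : ∀ {x y : X}, y ∈ U x → ∀ s : Set X, IsOpen s → x ∈ s → y ∈ s := by
    intro x y hy s hs hxs
    exact hy s ⟨hs, hxs⟩
  have hreach : ∀ {x y : X}, y ∈ U x → (connectednessGraph X).Reachable x y := by
    intro x y hy
    by_cases hxy : x = y
    · exact hxy ▸ SimpleGraph.Reachable.refl x
    · exact SimpleGraph.Adj.reachable ⟨hxy, pair_connected_of_specializes (hUspec hy)⟩
  constructor
  · intro hc
    obtain ⟨x⟩ : Nonempty X := hc.toNonempty
    set C : Set X := {y | (connectednessGraph X).Reachable x y} with hC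
    have hCopen : IsOpen C := by
      rw [isOpen_iff_forall_mem_open]
      intro y hy
      exact ⟨U y, fun z hz => hy.trans (hreach hz), hUopen y, hxU y⟩
    have hCcopen : IsOpen Cᶜ := by
      rw [isOpen_iff_forall_mem_open]
      intro y hy
      refine ⟨U y, fun z hz hzC => hy ?_, hUopen y, hxU y⟩
      exact hzC.trans (hreach hz).symm
    have : C = Set.univ := by
      have hclopen : IsClopen C := ⟨⟨hCcopen⟩, hCopen⟩
      exact hclopen.eq_univ ⟨x, SimpleGraph.Reachable.refl x⟩
    refine ⟨fun a b => ?_⟩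
    have ha : a ∈ C := this ▸ Set.mem_univ a
    have hb : b ∈ C := this ▸ Set.mem_univ b
    exact ha.symm.trans hb
  · intro hg
    have hne : Nonempty X := hg.nonempty
    obtain ⟨x⟩ := hne
    refine { toNonempty := ⟨x⟩, isPreconnected_univ := ?_ }
    apply isPreconnected_of_forall x
    intro y _
    obtain ⟨w⟩ := hg.preconnected x y
    obtain ⟨t, hxt, hyt, htc⟩ := walk_connected_set w
    exact ⟨t, Set.subset_univ t, hxt, hyt, htc.isPreconnected⟩
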